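/- Let f : U → ℝ^n be locally Lipschitz on an open convex set U ⊆ ℝ^n, let ‖·‖ be a norm on ℝ^n with compatible weak pairing ⟦·,·⟧ satisfying Deimling's inequality, and let c ∈ ℝ. If μ(Df(x)) ≤ c for almost every x ∈ U (where Df exists a.e. by Rademacher's theorem), then ⟦f(x)−f(y), x−y⟧ ≤ c‖x−y‖² for all x, y ∈ U. -/

import Mathlib

open MeasureTheory Filter Set
set_option maxHeartbeats 1000000

private lemma wp_bound {n : ℕ} (WP : (Fin n → ℝ) → (Fin n → ℝ) → ℝ)
    (hsub : ∀ x₁ x₂ y, WP (x₁ + x₂) y ≤ WP x₁ y + WP x₂ y)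
    (hhom₁ : ∀ (a : ℝ), 0 ≤ a → ∀ x y, WP (a • x) y = a * WP x y)
    (hneg : ∀ x y, WP (-x) (-y) = WP x y)
    (hcs : ∀ x y, |WP x y| ≤ Real.sqrt (WP x x) * Real.sqrt (WP y y)) :
    ∃ C : ℝ, 0 ≤ C ∧ ∀ u w, WP u w ≤ C * ‖u‖ * Real.sqrt (WP w w) := by
  classical
  set e : Fin n → (Fin n → ℝ) := fun i => Pi.single i 1 with he
  refine ⟨∑ i, Real.sqrt (WP (e i) (e i)), Finset.sum_nonneg fun i _ => Real.sqrt_nonneg _, ?_⟩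
  intro u w
  have hWP0 : WP 0 w = 0 := by
    have := hhom₁ 0 le_rfl 0 w
    simpa using this
  -- subadditivity over finite sums
  have hsum : ∀ (s : Finset (Fin n)) (gf : Fin n → (Fin n → ℝ)),
      WP (∑ i ∈ s, gf i) w ≤ ∑ i ∈ s, WP (gf i) w := by
    intro s gf
    induction s using Finset.cons_induction with
    | empty => simp [hWP0]
    | cons a s ha ih =>
      rw [Finset.sum_cons, Finset.sum_cons]
      exact (hsub (gf a) (∑ i ∈ s, gf i) w).trans (by linarith)
  -- single coordinate bound
  have hsingle : ∀ (i : Fin n) (a : ℝ),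
      WP (a • e i) w ≤ |a| * (Real.sqrt (WP (e i) (e i)) * Real.sqrt (WP w w)) := by
    intro i a
    rcases le_or_gt 0 a with h | h
    · rw [hhom₁ a h, abs_of_nonneg h]
      exact mul_le_mul_of_nonneg_left ((le_abs_self _).trans (hcs (e i) w)) h
    · have h1 : a • e i = (-a) • (-(e i)) := by rw [smul_neg, neg_smul, neg_neg]
      rw [h1, hhom₁ (-a) (by linarith), abs_of_neg h]
      refine mul_le_mul_of_nonneg_left ?_ (by linarith)
      have h2 := (le_abs_self _).trans (hcs (-(e i)) w)
      rwa [hneg (e i) (e i)] at h2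
  -- decomposition
  have hdec : u = ∑ i, (u i) • e i := by
    ext j
    simp [e, Finset.sum_apply, Pi.single_apply]
  calc WP u w = WP (∑ i, (u i) • e i) w := by rw [← hdec]
    _ ≤ ∑ i, WP ((u i) • e i) w := hsum _ _
    _ ≤ ∑ i, |u i| * (Real.sqrt (WP (e i) (e i)) * Real.sqrt (WP w w)) :=
        Finset.sum_le_sum fun i _ => hsingle i (u i)
    _ ≤ ∑ i, ‖u‖ * (Real.sqrt (WP (e i) (e i)) * Real.sqrt (WP w w)) := by
        refine Finset.sum_le_sum fun i _ => ?_
        have : |u i| ≤ ‖u‖ := by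
          simpa [Real.norm_eq_abs] using norm_le_pi_norm u i
        exact mul_le_mul_of_nonneg_right this
          (mul_nonneg (Real.sqrt_nonneg _) (Real.sqrt_nonneg _))
    _ = (∑ i, Real.sqrt (WP (e i) (e i))) * ‖u‖ * Real.sqrt (WP w w) := by
        simp only [Finset.sum_mul]
        refine Finset.sum_congr rfl fun i _ => by ring

private lemma cont_of_hf {n : ℕ} {U : Set (Fin n → ℝ)} (hUopen : IsOpen U)
    {f : (Fin n → ℝ) → (Fin n → ℝ)}
    (hf : ∀ x ∈ U, ∃ K : NNReal, ∃ s ∈ nhdsWithin x U, LipschitzOnWith K f s) :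
    ∀ p ∈ U, ContinuousAt f p := by
  intro p hp
  obtain ⟨K, s, hs, hls⟩ := hf p hp
  rw [hUopen.nhdsWithin_eq hp] at hs
  exact hls.continuousOn.continuousAt hs

private lemma ae_diff_of_locally_lip {n : ℕ} {U : Set (Fin n → ℝ)} (hUopen : IsOpen U)
    {f : (Fin n → ℝ) → (Fin n → ℝ)}
    (hf : ∀ x ∈ U, ∃ K : NNReal, ∃ s ∈ nhdsWithin x U, LipschitzOnWith K f s) :
    ∀ᵐ x ∂(volume : Measure (Fin n → ℝ)), x ∈ U → DifferentiableAt ℝ f x := by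
  classical
  have key : ∀ x : Fin n → ℝ, ∃ r : ℝ, 0 < r ∧ (x ∈ U →
      volume {p | p ∈ Metric.ball x r ∧ ¬ DifferentiableAt ℝ f p} = 0) := by
    intro x
    by_cases hx : x ∈ U
    · obtain ⟨K, s, hs, hls⟩ := hf x hx
      rw [hUopen.nhdsWithin_eq hx] at hs
      obtain ⟨r, hr, hball⟩ := Metric.mem_nhds_iff.mp hs
      obtain ⟨g, hg, hfg⟩ := (hls.mono hball).extend_pi
      refine ⟨r, hr, fun _ => ?_⟩
      have hae : volume {p | ¬ DifferentiableAt ℝ f p ∧ p ∈ Metric.ball x r} = 0 := by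
        have h2 := hg.ae_differentiableAt (μ := (volume : Measure (Fin n → ℝ)))
        refine measure_mono_null ?_ (ae_iff.mp h2)
        rintro p ⟨hpnd, hpb⟩
        simp only [Set.mem_setOf_eq]
        intro hdg
        apply hpnd
        have heq : f =ᶠ[nhds p] g :=
          eventually_of_mem (Metric.isOpen_ball.mem_nhds hpb) fun q hq => hfg hq
        exact hdg.congr_of_eventuallyEq heq
      refine measure_mono_null ?_ hae
      rintro p ⟨h1, h2⟩; exact ⟨h2, h1⟩
    · exact ⟨1, one_pos, fun h => absurd h hx⟩
  choose r hr0 hrnull using key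
  obtain ⟨T, hTc, hTU⟩ := TopologicalSpace.isOpen_iUnion_countable
    (fun x : U => Metric.ball (x : Fin n → ℝ) (r x)) (fun _ => Metric.isOpen_ball)
  rw [ae_iff]
  refine measure_mono_null (fun p hp => ?_)
    ((measure_biUnion_null_iff hTc).mpr fun i _ => hrnull i i.2)
  simp only [Set.mem_setOf_eq, Classical.not_imp] at hp
  obtain ⟨hpU, hpnd⟩ := hp
  have : p ∈ ⋃ i : U, Metric.ball (i : Fin n → ℝ) (r i) :=
    Set.mem_iUnion.mpr ⟨⟨p, hpU⟩, Metric.mem_ball_self (hr0 p)⟩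
  rw [← hTU] at this
  obtain ⟨i, hiT, hpi⟩ := Set.mem_iUnion₂.mp this
  exact Set.mem_iUnion₂.mpr ⟨i, hiT, hpi, hpnd⟩

private lemma segment_est {n : ℕ} {U : Set (Fin n → ℝ)} (hUopen : IsOpen U)
    {f : (Fin n → ℝ) → (Fin n → ℝ)}
    (hf : ∀ x ∈ U, ∃ K : NNReal, ∃ s ∈ nhdsWithin x U, LipschitzOnWith K f s)
    {WP : (Fin n → ℝ) → (Fin n → ℝ) → ℝ} {N : (Fin n → ℝ) → ℝ}
    (hsub : ∀ x₁ x₂ y, WP (x₁ + x₂) y ≤ WP x₁ y + WP x₂ y)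
    (hhom₁ : ∀ (a : ℝ), 0 ≤ a → ∀ x y, WP (a • x) y = a * WP x y)
    {C : ℝ} (hC0 : 0 ≤ C) (hCb : ∀ u w, WP u w ≤ C * ‖u‖ * N w)
    (hNv0 : ∀ w, 0 ≤ N w) {c : ℝ} {B : Set (Fin n → ℝ)}
    {v y0 : Fin n → ℝ}
    (hseg : ∀ t ∈ Icc (0:ℝ) 1, y0 + t • v ∈ U)
    (hnull : volume {t : ℝ | y0 + t • v ∈ B} = 0)
    (hBgood : ∀ p ∈ U, p ∉ B → ∃ A : (Fin n → ℝ) →L[ℝ] (Fin n → ℝ),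
      HasFDerivAt f A p ∧ WP (A v) v ≤ c * N v ^ 2) :
    WP (f (y0 + v) - f y0) v ≤ c * N v ^ 2 := by
  classical
  set γ : ℝ → (Fin n → ℝ) := fun t => y0 + t • v with hγdef
  have hγcont : Continuous γ := by fun_prop
  have hfc : ∀ p ∈ U, ContinuousAt f p := by
    intro p hp
    obtain ⟨K, s, hs, hls⟩ := hf p hp
    rw [hUopen.nhdsWithin_eq hp] at hs
    exact hls.continuousOn.continuousAt hs
  set w : ℝ → (Fin n → ℝ) := fun t => f (γ t) with hwdef
  have hwcont : ∀ t ∈ Icc (0:ℝ) 1, ContinuousAt w t := by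
    intro t ht
    have h1 : ContinuousAt f (γ t) := hfc _ (hseg t ht)
    exact ContinuousAt.comp (g := f) (f := γ) h1 hγcont.continuousAt
  -- local Lipschitz data along segment
  have hloc : ∀ t : ℝ, ∃ ρ : ℝ, ∃ Kl : NNReal, 0 < ρ ∧
      (t ∈ Icc (0:ℝ) 1 → LipschitzOnWith Kl f (Metric.ball (γ t) ρ)) := by
    intro t
    by_cases ht : t ∈ Icc (0:ℝ) 1
    · obtain ⟨K, s, hs, hls⟩ := hf (γ t) (hseg t ht)
      rw [hUopen.nhdsWithin_eq (hseg t ht)] at hs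
      obtain ⟨ρ, hρ, hball⟩ := Metric.mem_nhds_iff.mp hs
      exact ⟨ρ, K, hρ, fun _ => hls.mono hball⟩
    · exact ⟨1, 0, one_pos, fun h => absurd h ht⟩
  choose ρ Kl hρ hKl using hloc
  obtain ⟨F, hFsub, hFcov⟩ := isCompact_Icc.elim_nhds_subcover
    (fun t => γ ⁻¹' Metric.ball (γ t) (ρ t))
    (fun t _ => (Metric.isOpen_ball.preimage hγcont).mem_nhds
      (by simp [Metric.mem_ball, hρ t]))
  set Kl' : NNReal := F.sup Kl with hKl'
  set K' : ℝ := C * ((Kl' : ℝ) * ‖v‖) * N v with hK'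
  have hK'0 : 0 ≤ K' := by
    rw [hK']
    exact mul_nonneg (mul_nonneg hC0 (mul_nonneg Kl'.coe_nonneg (norm_nonneg v))) (hNv0 v)
  set m : ℝ := c * N v ^ 2 with hm
  set M : ℝ := K' + |m| + 1 with hM
  have hM0 : 0 < M := by
    have := abs_nonneg m; linarith
  set g : ℝ → ℝ := fun t => WP (w t - w 0) v with hg
  have hWP0 : WP 0 v = 0 := by
    have := hhom₁ 0 le_rfl 0 v
    simpa using this
  have hg0 : g 0 = 0 := by simp [hg, hWP0]
  have hgdiff : ∀ a b : ℝ, g a - g b ≤ C * ‖w a - w b‖ * N v := by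
    intro a b
    have h1 : WP (w a - w 0) v ≤ WP (w a - w b) v + WP (w b - w 0) v := by
      have := hsub (w a - w b) (w b - w 0) v
      rwa [sub_add_sub_cancel] at this
    have h2 := hCb (w a - w b) v
    simp only [hg]
    linarith
  have habs : ∀ a b : ℝ, |g a - g b| ≤ C * ‖w a - w b‖ * N v := by
    intro a b
    rw [abs_sub_le_iff]
    refine ⟨hgdiff a b, ?_⟩
    have := hgdiff b a
    rwa [norm_sub_rev] at this
  have hgcont : ContinuousOn g (Icc 0 1) := by
    intro t ht
    have hw : ContinuousWithinAt w (Icc 0 1) t := (hwcont t ht).continuousWithinAt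
    have hb : Tendsto (fun t' => C * ‖w t' - w t‖ * N v) (nhdsWithin t (Icc 0 1)) (nhds 0) := by
      have h1 : Tendsto (fun t' => w t' - w t) (nhdsWithin t (Icc 0 1)) (nhds 0) := by
        have h2 : Tendsto (fun t' => w t' - w t) (nhdsWithin t (Icc 0 1)) (nhds (w t - w t)) :=
          Filter.Tendsto.sub hw tendsto_const_nhds
        rwa [sub_self] at h2
      have := (h1.norm.const_mul C).mul_const (N v)
      simpa using this
    refine tendsto_iff_dist_tendsto_zero.mpr (squeeze_zero (fun _ => dist_nonneg) ?_ hb)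
    intro t'
    rw [Real.dist_eq]
    exact habs t' t
  -- main per-ε estimate
  have main : ∀ ε : ℝ, 0 < ε → g 1 ≤ m + M * ε := by
    intro ε hε
    obtain ⟨O, hBO, hOopen, hOvol⟩ := Set.exists_isOpen_lt_of_lt {t : ℝ | γ t ∈ B}
      (ENNReal.ofReal ε) (by rw [hnull]; exact ENNReal.ofReal_pos.mpr hε)
    have hOfin : ∀ s : Set ℝ, volume (O ∩ s) ≠ ⊤ :=
      fun s => ((measure_mono inter_subset_left).trans_lt
        (hOvol.trans ENNReal.ofReal_lt_top)).ne
    set V : ℝ → ℝ := fun t => (volume (O ∩ Icc 0 t)).toReal with hV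
    have hVmono : ∀ s t : ℝ, s ≤ t → V s ≤ V t := by
      intro s t hst
      exact ENNReal.toReal_mono (hOfin _)
        (measure_mono (inter_subset_inter_right _ (Icc_subset_Icc le_rfl hst)))
    have hVlip : ∀ s t : ℝ, s ≤ t → V t ≤ V s + (t - s) := by
      intro s t hst
      have hsub2 : O ∩ Icc 0 t ⊆ (O ∩ Icc 0 s) ∪ Ioc s t := by
        rintro u ⟨huO, hu0, hut⟩
        rcases le_or_gt u s with h | h
        · exact Or.inl ⟨huO, hu0, h⟩
        · exact Or.inr ⟨h, hut⟩
      have h1 : volume (O ∩ Icc 0 t) ≤ volume (O ∩ Icc 0 s) + volume (Ioc s t) :=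
        (measure_mono hsub2).trans (measure_union_le _ _)
      have h2 : V t ≤ (volume (O ∩ Icc 0 s) + volume (Ioc s t)).toReal :=
        ENNReal.toReal_mono (by simp [ENNReal.add_ne_top, hOfin, Real.volume_Ioc]) h1
      rwa [ENNReal.toReal_add (hOfin _) (by simp [Real.volume_Ioc]), Real.volume_Ioc,
        ENNReal.toReal_ofReal (by linarith)] at h2
    have hVcont : Continuous V := by
      have : LipschitzWith 1 V := by
        refine LipschitzWith.of_dist_le_mul fun a b => ?_
        rw [Real.dist_eq, Real.dist_eq, NNReal.coe_one, one_mul, abs_sub_le_iff]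
        rcases le_total a b with h | h
        · constructor
          · have := hVmono a b h; linarith [abs_nonneg (a - b)]
          · have := hVlip a b h
            have : V b - V a ≤ b - a := by linarith
            calc V b - V a ≤ b - a := this
              _ ≤ |b - a| := le_abs_self _
              _ = |a - b| := abs_sub_comm _ _
        · constructor
          · have := hVlip b a h
            calc V a - V b ≤ a - b := by linarith
              _ ≤ |a - b| := le_abs_self _
          · have := hVmono b a h; linarith [abs_nonneg (a - b)]
      exact this.continuous
    have hVadd : ∀ s t : ℝ, 0 ≤ s → s ≤ t → Ioc s t ⊆ O → V t = V s + (t - s) := by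
      intro s t hs hst hsubO
      have hdisj : Disjoint (O ∩ Icc 0 s) (O ∩ Ioc s t) := by
        refine Disjoint.mono inter_subset_right inter_subset_right ?_
        rw [Set.disjoint_left]
        rintro u ⟨_, hu⟩ ⟨hu', _⟩
        exact absurd hu (not_le.mpr hu')
      have hun : O ∩ Icc 0 t = (O ∩ Icc 0 s) ∪ (O ∩ Ioc s t) := by
        rw [← Set.inter_union_distrib_left, Set.Icc_union_Ioc_eq_Icc hs hst]
      have hmeq : volume (O ∩ Icc 0 t) = volume (O ∩ Icc 0 s) + volume (O ∩ Ioc s t) := by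
        rw [hun, measure_union hdisj (hOopen.measurableSet.inter measurableSet_Ioc)]
      have h2 : O ∩ Ioc s t = Ioc s t := Set.inter_eq_right.mpr hsubO
      simp only [hV]
      rw [hmeq, h2, ENNReal.toReal_add (hOfin _) (by simp [Real.volume_Ioc]),
        Real.volume_Ioc, ENNReal.toReal_ofReal (by linarith)]
    -- fencing
    set G : ℝ → ℝ := fun t => g t - M * V t with hG
    have hGcont : ContinuousOn G (Icc 0 1) :=
      hgcont.sub ((continuous_const.mul hVcont).continuousOn)
    have bound : ∀ τ ∈ Ico (0:ℝ) 1, ∀ r, (fun _ : ℝ => m) τ < r →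
        ∃ᶠ ζ in nhdsWithin τ (Ioi τ), slope G τ ζ < r := by
      intro τ hτ r hr
      have hτI : τ ∈ Icc (0:ℝ) 1 := ⟨hτ.1, hτ.2.le⟩
      by_cases hτO : τ ∈ O
      · -- inside O : use uniform Lipschitz bound and the penalty term
        obtain ⟨η, hη, hballO⟩ := Metric.isOpen_iff.mp hOopen τ hτO
        obtain ⟨i, hiF, hiτ⟩ : ∃ i ∈ F, τ ∈ γ ⁻¹' Metric.ball (γ i) (ρ i) := by
          have := hFcov hτI
          simpa using this
        have h2 : ∀ᶠ ζ in nhdsWithin τ (Ioi τ), γ ζ ∈ Metric.ball (γ i) (ρ i) := by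
          have hmem : γ ⁻¹' Metric.ball (γ i) (ρ i) ∈ nhds τ :=
            (Metric.isOpen_ball.preimage hγcont).mem_nhds hiτ
          exact eventually_nhdsWithin_of_eventually_nhds hmem
        have h1 : ∀ᶠ ζ in nhdsWithin τ (Ioi τ), ζ ∈ Ioo τ (τ + η) :=
          Ioo_mem_nhdsGT_of_mem ⟨le_rfl, by linarith⟩
        refine (Filter.Eventually.frequently ?_)
        filter_upwards [h1, h2] with ζ hζIoo hζball
        have hζτ : τ < ζ := hζIoo.1
        have hIocO : Ioc τ ζ ⊆ O := by
          intro u hu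
          apply hballO
          rw [Metric.mem_ball, Real.dist_eq, abs_of_pos (by linarith [hu.1])]
          linarith [hu.2, hζIoo.2]
        have hVz : V ζ = V τ + (ζ - τ) := hVadd τ ζ hτ.1 hζτ.le hIocO
        have hwb : ‖w ζ - w τ‖ ≤ (Kl i : ℝ) * ((ζ - τ) * ‖v‖) := by
          have hd := (hKl i (hFsub i hiF)).dist_le_mul (γ ζ) hζball (γ τ) hiτ
          rw [dist_eq_norm, dist_eq_norm] at hd
          have hγd : γ ζ - γ τ = (ζ - τ) • v := by
            simp only [hγdef, sub_smul]
            abel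
          calc ‖w ζ - w τ‖ ≤ (Kl i : ℝ) * ‖γ ζ - γ τ‖ := hd
            _ = (Kl i : ℝ) * ((ζ - τ) * ‖v‖) := by
                rw [hγd, norm_smul, Real.norm_eq_abs, abs_of_pos (by linarith)]
        have hKli : (Kl i : ℝ) ≤ (Kl' : ℝ) := by
          exact_mod_cast Finset.le_sup hiF
        have hgb : g ζ - g τ ≤ K' * (ζ - τ) := by
          have h3 := hgdiff ζ τ
          have h4 : C * ‖w ζ - w τ‖ * N v ≤ C * ((Kl' : ℝ) * ((ζ - τ) * ‖v‖)) * N v := by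
            have h5 : ‖w ζ - w τ‖ ≤ (Kl' : ℝ) * ((ζ - τ) * ‖v‖) :=
              hwb.trans (mul_le_mul_of_nonneg_right hKli
                (mul_nonneg (by linarith) (norm_nonneg v)))
            exact mul_le_mul_of_nonneg_right (mul_le_mul_of_nonneg_left h5 hC0) (hNv0 v)
          calc g ζ - g τ ≤ C * ((Kl' : ℝ) * ((ζ - τ) * ‖v‖)) * N v := h3.trans h4
            _ = K' * (ζ - τ) := by rw [hK']; ring
        rw [slope_def_field]
        have hGd : G ζ - G τ = (g ζ - g τ) - M * (ζ - τ) := by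
          simp only [hG, hVz]; ring
        rw [div_lt_iff₀ (by linarith)]
        have hexp : (K' - M) * (ζ - τ) = K' * (ζ - τ) - M * (ζ - τ) := by ring
        have h6 : G ζ - G τ ≤ (K' - M) * (ζ - τ) := by
          rw [hGd, hexp]; linarith
        have hKM : K' - M < r := by
          rw [hM]
          have := neg_abs_le m
          linarith
        have h7 : (K' - M) * (ζ - τ) < r * (ζ - τ) :=
          mul_lt_mul_of_pos_right hKM (by linarith)
        linarith
      · -- good point : derivative estimate
        have hγτU : γ τ ∈ U := hseg τ hτI
        have hγτB : γ τ ∉ B := fun h => hτO (hBO h)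
        obtain ⟨A, hA, hAb⟩ := hBgood (γ τ) hγτU hγτB
        have hγd : HasDerivAt γ v τ := by
          have h1 : HasDerivAt (fun t : ℝ => t • v) ((1:ℝ) • v) τ :=
            (hasDerivAt_id τ).smul_const v
          have h2 := h1.const_add y0
          rw [one_smul] at h2
          exact h2
        have hw : HasDerivAt w (A v) τ := hA.comp_hasDerivAt τ hγd
        have hslope : Tendsto (slope w τ) (nhdsWithin τ (Ioi τ)) (nhds (A v)) :=
          (hasDerivAt_iff_tendsto_slope.mp hw).mono_left
            (nhdsWithin_mono _ (fun ζ hζ => ne_of_gt hζ))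
        have hsq : ∀ ζ : ℝ, dist (WP (slope w τ ζ) v) (WP (A v) v) ≤
            C * ‖slope w τ ζ - A v‖ * N v := by
          intro ζ
          rw [Real.dist_eq, abs_sub_le_iff]
          constructor
          · have h1 : WP (slope w τ ζ) v ≤ WP (slope w τ ζ - A v) v + WP (A v) v := by
              have := hsub (slope w τ ζ - A v) (A v) v
              rwa [sub_add_cancel] at this
            linarith [hCb (slope w τ ζ - A v) v]
          · have h1 : WP (A v) v ≤ WP (A v - slope w τ ζ) v + WP (slope w τ ζ) v := by
              have := hsub (A v - slope w τ ζ) (slope w τ ζ) v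
              rwa [sub_add_cancel] at this
            have h2 := hCb (A v - slope w τ ζ) v
            rw [norm_sub_rev] at h2
            linarith
        have hWtend : Tendsto (fun ζ => WP (slope w τ ζ) v) (nhdsWithin τ (Ioi τ))
            (nhds (WP (A v) v)) := by
          refine tendsto_iff_dist_tendsto_zero.mpr (squeeze_zero (fun _ => dist_nonneg)
            (fun ζ => hsq ζ) ?_)
          have h1 : Tendsto (fun ζ => slope w τ ζ - A v) (nhdsWithin τ (Ioi τ))
              (nhds (A v - A v)) := Filter.Tendsto.sub hslope tendsto_const_nhds
          rw [sub_self] at h1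
          have h2 := (h1.norm.const_mul C).mul_const (N v)
          simpa using h2
        have hev1 : ∀ᶠ ζ in nhdsWithin τ (Ioi τ), WP (slope w τ ζ) v < r := by
          refine hWtend.eventually (Filter.Tendsto.eventually_lt_const ?_ tendsto_id)
          calc WP (A v) v ≤ m := hAb
            _ < r := hr
        refine Filter.Eventually.frequently ?_
        filter_upwards [hev1, self_mem_nhdsWithin] with ζ h1 (h2 : ζ ∈ Ioi τ)
        have hζτ : τ < ζ := h2
        rw [slope_def_field]
        have hgle : g ζ - g τ ≤ WP (w ζ - w τ) v := by
          have := hsub (w ζ - w τ) (w τ - w 0) v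
          rw [sub_add_sub_cancel] at this
          simp only [hg]
          linarith
        have hWPslope : WP (w ζ - w τ) v = (ζ - τ) * WP (slope w τ ζ) v := by
          have hs1 : slope w τ ζ = (ζ - τ)⁻¹ • (w ζ - w τ) := rfl
          have h5 := hhom₁ (ζ - τ) (by linarith) (slope w τ ζ) v
          rw [← h5]
          congr 1
          rw [hs1, smul_smul, mul_inv_cancel₀ (by linarith), one_smul]
        have hGle : G ζ - G τ ≤ (ζ - τ) * WP (slope w τ ζ) v := by
          have hVm := hVmono τ ζ hζτ.le
          have hMV : M * V τ ≤ M * V ζ := mul_le_mul_of_nonneg_left hVm hM0.le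
          have h8 : G ζ - G τ ≤ g ζ - g τ := by
            simp only [hG]
            linarith
          calc G ζ - G τ ≤ g ζ - g τ := h8
            _ ≤ WP (w ζ - w τ) v := hgle
            _ = (ζ - τ) * WP (slope w τ ζ) v := hWPslope
        rw [div_lt_iff₀ (by linarith)]
        have h9 : (ζ - τ) * WP (slope w τ ζ) v < (ζ - τ) * r :=
          mul_lt_mul_of_pos_left h1 (by linarith)
        have h10 : (ζ - τ) * r = r * (ζ - τ) := by ring
        linarith
    have key := image_le_of_liminf_slope_right_le_deriv_boundary (f := G) (a := 0) (b := 1)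
      (B := fun t => G 0 + m * t) (B' := fun _ => m) hGcont (by simp)
      ((continuous_const.add (continuous_const.mul continuous_id)).continuousOn)
      (fun t _ => by
        have : HasDerivAt (fun t : ℝ => G 0 + m * t) (m * 1) t :=
          ((hasDerivAt_id t).const_mul m).const_add (G 0)
        simpa using this.hasDerivWithinAt) bound
    have hG1 := key (right_mem_Icc.mpr zero_le_one)
    have hV1 : V 1 ≤ ε := by
      have h1 : volume (O ∩ Icc 0 1) ≤ ENNReal.ofReal ε :=
        ((measure_mono inter_subset_left).trans hOvol.le)
      calc V 1 ≤ (ENNReal.ofReal ε).toReal := ENNReal.toReal_mono ENNReal.ofReal_ne_top h1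
        _ = ε := ENNReal.toReal_ofReal hε.le
    have hV0 : 0 ≤ V 0 := ENNReal.toReal_nonneg
    have hMe : M * V 1 ≤ M * ε := mul_le_mul_of_nonneg_left hV1 hM0.le
    have hMV0 : 0 ≤ M * V 0 := mul_nonneg hM0.le hV0
    simp only [hG, mul_one] at hG1
    linarith [hg0]
  -- conclude g 1 ≤ m
  have hg1 : g 1 ≤ m := by
    by_contra hcon
    push_neg at hcon
    have hε : 0 < (g 1 - m) / (2 * M) := div_pos (by linarith) (by linarith)
    have := main _ hε
    have hMeq : M * ((g 1 - m) / (2 * M)) = (g 1 - m) / 2 := by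
      field_simp
    rw [hMeq] at this
    linarith
  have hw1 : w 1 = f (y0 + v) := by simp [hwdef, hγdef]
  have hw0 : w 0 = f y0 := by simp [hwdef, hγdef]
  have hgoal : WP (w 1 - w 0) v ≤ m := hg1
  rw [hw1, hw0] at hgoal
  exact hgoal

/-- If `f` is locally Lipschitz on an open convex set `U`, `⟦·,·⟧` is a weak
pairing compatible with the norm `N` and satisfying Deimling's inequality, and
the logarithmic norm of the Jacobian (expressed via Lumer's equality) is at most
`c` almost everywhere on `U`, then `f` is one-sided Lipschitz with constant `c`. -/
theorem osL_of_ae_logNorm_le {n : ℕ} (U : Set (Fin n → ℝ))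
    (hUopen : IsOpen U) (hUconv : Convex ℝ U)
    (f : (Fin n → ℝ) → (Fin n → ℝ))
    (hf : ∀ x ∈ U, ∃ K : NNReal, ∃ s ∈ nhdsWithin x U, LipschitzOnWith K f s)
    (WP : (Fin n → ℝ) → (Fin n → ℝ) → ℝ)
    (N : (Fin n → ℝ) → ℝ) (hN : ∀ x, N x = Real.sqrt (WP x x))
    (hsub : ∀ x₁ x₂ y, WP (x₁ + x₂) y ≤ WP x₁ y + WP x₂ y)
    (hcont : ∀ y, Continuous fun x => WP x y)
    (hhom₁ : ∀ (a : ℝ), 0 ≤ a → ∀ x y, WP (a • x) y = a * WP x y)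
    (hhom₂ : ∀ (a : ℝ), 0 ≤ a → ∀ x y, WP x (a • y) = a * WP x y)
    (hneg : ∀ x y, WP (-x) (-y) = WP x y)
    (hpos : ∀ x, x ≠ 0 → 0 < WP x x)
    (hcs : ∀ x y, |WP x y| ≤ Real.sqrt (WP x x) * Real.sqrt (WP y y))
    (hdeim : ∀ x y L, Tendsto (fun h : ℝ => (N (y + h • x) - N y) / h)
      (nhdsWithin 0 (Set.Ioi 0)) (nhds L) → WP x y ≤ N y * L)
    (c : ℝ)
    (hmu : ∀ᵐ x ∂(volume : Measure (Fin n → ℝ)), x ∈ U →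
      ∀ A : (Fin n → ℝ) →L[ℝ] (Fin n → ℝ), HasFDerivAt f A x →
        ∀ v, WP (A v) v ≤ c * (N v) ^ 2) :
    ∀ x ∈ U, ∀ y ∈ U, WP (f x - f y) (x - y) ≤ c * (N (x - y)) ^ 2 := by
  classical
  obtain ⟨C, hC0, hCb'⟩ := wp_bound WP hsub hhom₁ hneg hcs
  have hCb : ∀ u w, WP u w ≤ C * ‖u‖ * N w := fun u w => by rw [hN]; exact hCb' u w
  have hNv0 : ∀ w, 0 ≤ N w := fun w => by rw [hN]; exact Real.sqrt_nonneg _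
  have hdiffae := ae_diff_of_locally_lip hUopen hf
  have hfc := cont_of_hf hUopen hf
  have hboth : ∀ᵐ p ∂(volume : Measure (Fin n → ℝ)), p ∈ U →
      (DifferentiableAt ℝ f p ∧ ∀ A : (Fin n → ℝ) →L[ℝ] (Fin n → ℝ),
        HasFDerivAt f A p → ∀ v, WP (A v) v ≤ c * N v ^ 2) := by
    filter_upwards [hmu, hdiffae] with p h1 h2 hp
    exact ⟨h2 hp, h1 hp⟩
  set B : Set (Fin n → ℝ) := toMeasurable volume {p | ¬ (p ∈ U →
      (DifferentiableAt ℝ f p ∧ ∀ A : (Fin n → ℝ) →L[ℝ] (Fin n → ℝ),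
        HasFDerivAt f A p → ∀ v, WP (A v) v ≤ c * N v ^ 2))} with hBdef
  have hBmeas : MeasurableSet B := measurableSet_toMeasurable _ _
  have hBnull : volume B = 0 := by
    rw [hBdef, measure_toMeasurable]
    exact ae_iff.mp hboth
  have hBgood : ∀ p ∈ U, p ∉ B → DifferentiableAt ℝ f p ∧
      ∀ A : (Fin n → ℝ) →L[ℝ] (Fin n → ℝ),
        HasFDerivAt f A p → ∀ v, WP (A v) v ≤ c * N v ^ 2 := by
    intro p hp hpB
    by_contra h
    exact hpB (subset_toMeasurable _ _ (fun himp => h (himp hp)))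
  intro x hx y hy
  set v : Fin n → ℝ := x - y with hv
  have hKcomp : IsCompact (segment ℝ y x) := by
    rw [segment_eq_image']
    exact isCompact_Icc.image (by fun_prop)
  have hKU : segment ℝ y x ⊆ U := hUconv.segment_subset hy hx
  obtain ⟨δ, hδ0, hδU⟩ := hKcomp.exists_thickening_subset_open hUopen hKU
  -- every point near the segment is in U
  have hnear : ∀ p ∈ segment ℝ y x, ∀ z : Fin n → ℝ, ‖z‖ < δ → p + z ∈ U := by
    intro p hp z hz
    apply hδU
    rw [Metric.mem_thickening_iff]
    refine ⟨p, hp, ?_⟩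
    rw [dist_eq_norm]
    have : p + z - p = z := by abel
    rwa [this]
  -- Fubini
  have hfub : ∀ᵐ z ∂(volume : Measure (Fin n → ℝ)),
      volume {t : ℝ | y + z + t • v ∈ B} = 0 := by
    set S : Set ((Fin n → ℝ) × ℝ) := {p | y + p.1 + p.2 • v ∈ B} with hSdef
    have hSmap : Continuous fun p : (Fin n → ℝ) × ℝ => y + p.1 + p.2 • v := by fun_prop
    have hSm : MeasurableSet S := hBmeas.preimage hSmap.measurable
    have hS0 : (volume : Measure ((Fin n → ℝ) × ℝ)) S = 0 := by
      rw [Measure.volume_eq_prod, Measure.prod_apply_symm hSm]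
      have hslice : ∀ t : ℝ, volume ((fun z : Fin n → ℝ => (z, t)) ⁻¹' S) = 0 := by
        intro t
        have hpre : ((fun z : Fin n → ℝ => (z, t)) ⁻¹' S) =
            (fun z : Fin n → ℝ => (y + t • v) + z) ⁻¹' B := by
          ext z
          have : y + z + t • v = y + t • v + z := by abel
          simp [hSdef, this]
        rw [hpre, measure_preimage_add]
        exact hBnull
      simp [hslice]
    have hS0' : ((volume : Measure (Fin n → ℝ)).prod (volume : Measure ℝ)) S = 0 := by
      rw [← Measure.volume_eq_prod]; exact hS0
    have hae := Measure.measure_ae_null_of_prod_null hS0'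
    filter_upwards [hae] with z hz
    exact hz
  -- key estimate for good z
  have hkey : ∀ z : Fin n → ℝ, ‖z‖ < δ → volume {t : ℝ | y + z + t • v ∈ B} = 0 →
      WP (f (x + z) - f (y + z)) v ≤ c * N v ^ 2 := by
    intro z hzδ hznull
    have hseg : ∀ t ∈ Icc (0:ℝ) 1, (y + z) + t • v ∈ U := by
      intro t ht
      have hmem : y + t • v ∈ segment ℝ y x := by
        rw [segment_eq_image']
        exact ⟨t, ht, rfl⟩
      have := hnear _ hmem z hzδ
      have heq : y + t • v + z = y + z + t • v := by abel
      rwa [heq] at this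
    have hznull' : volume {t : ℝ | (y + z) + t • v ∈ B} = 0 := hznull
    have hBgood' : ∀ p ∈ U, p ∉ B → ∃ A : (Fin n → ℝ) →L[ℝ] (Fin n → ℝ),
        HasFDerivAt f A p ∧ WP (A v) v ≤ c * N v ^ 2 := by
      intro p hp hpB
      obtain ⟨hd, hbound⟩ := hBgood p hp hpB
      exact ⟨fderiv ℝ f p, hd.hasFDerivAt, hbound _ hd.hasFDerivAt v⟩
    have hres := segment_est hUopen hf hsub hhom₁ hC0 hCb hNv0 hseg hznull' hBgood'
    have heq : y + z + v = x + z := by rw [hv]; abel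
    rwa [heq] at hres
  -- pass to the limit z → 0
  by_contra hcon
  push_neg at hcon
  set h : (Fin n → ℝ) → ℝ := fun z => WP (f (x + z) - f (y + z)) v with hh
  have hconth : ∀ z₀ : Fin n → ℝ, ‖z₀‖ < δ → ContinuousAt h z₀ := by
    intro z₀ hz₀
    have hxU : ContinuousAt (fun z : Fin n → ℝ => f (x + z)) z₀ := by
      have h1 : ContinuousAt f (x + z₀) :=
        hfc _ (hnear x (right_mem_segment ℝ y x) z₀ hz₀)
      exact ContinuousAt.comp (g := f) h1 (by fun_prop)
    have hyU : ContinuousAt (fun z : Fin n → ℝ => f (y + z)) z₀ := by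
      have h1 : ContinuousAt f (y + z₀) :=
        hfc _ (hnear y (left_mem_segment ℝ y x) z₀ hz₀)
      exact ContinuousAt.comp (g := f) h1 (by fun_prop)
    have hF : ContinuousAt (fun z : Fin n → ℝ => f (x + z) - f (y + z)) z₀ := hxU.sub hyU
    have hsq : ∀ z : Fin n → ℝ, dist (h z) (h z₀) ≤
        C * ‖(f (x + z) - f (y + z)) - (f (x + z₀) - f (y + z₀))‖ * N v := by
      intro z
      rw [Real.dist_eq, abs_sub_le_iff]
      constructor
      · have h1 : WP (f (x + z) - f (y + z)) v ≤
            WP ((f (x + z) - f (y + z)) - (f (x + z₀) - f (y + z₀))) v +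
            WP (f (x + z₀) - f (y + z₀)) v := by
          have := hsub ((f (x + z) - f (y + z)) - (f (x + z₀) - f (y + z₀)))
            (f (x + z₀) - f (y + z₀)) v
          rwa [sub_add_cancel] at this
        have h2 := hCb ((f (x + z) - f (y + z)) - (f (x + z₀) - f (y + z₀))) v
        simp only [hh]
        linarith
      · have h1 : WP (f (x + z₀) - f (y + z₀)) v ≤
            WP ((f (x + z₀) - f (y + z₀)) - (f (x + z) - f (y + z))) v +
            WP (f (x + z) - f (y + z)) v := by
          have := hsub ((f (x + z₀) - f (y + z₀)) - (f (x + z) - f (y + z)))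
            (f (x + z) - f (y + z)) v
          rwa [sub_add_cancel] at this
        have h2 := hCb ((f (x + z₀) - f (y + z₀)) - (f (x + z) - f (y + z))) v
        rw [norm_sub_rev] at h2
        simp only [hh]
        linarith
    refine tendsto_iff_dist_tendsto_zero.mpr (squeeze_zero (fun _ => dist_nonneg)
      (fun z => hsq z) ?_)
    have h1 : Tendsto (fun z : Fin n → ℝ => (f (x + z) - f (y + z)) -
        (f (x + z₀) - f (y + z₀))) (nhds z₀) (nhds 0) := by
      have h2 : Tendsto (fun z : Fin n → ℝ => (f (x + z) - f (y + z)) -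
          (f (x + z₀) - f (y + z₀))) (nhds z₀)
          (nhds ((f (x + z₀) - f (y + z₀)) - (f (x + z₀) - f (y + z₀)))) :=
        Filter.Tendsto.sub hF tendsto_const_nhds
      rwa [sub_self] at h2
    have h2 := (h1.norm.const_mul C).mul_const (N v)
    simpa using h2
  set W : Set (Fin n → ℝ) := {z | ‖z‖ < δ ∧ c * N v ^ 2 < h z} with hW
  have hWopen : IsOpen W := by
    rw [isOpen_iff_mem_nhds]
    rintro z₀ ⟨h1, h2⟩
    have he1 : ∀ᶠ z in nhds z₀, ‖z‖ < δ :=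
      (continuous_norm.continuousAt).eventually_lt_const h1
    have he2 : ∀ᶠ z in nhds z₀, c * N v ^ 2 < h z :=
      (hconth z₀ h1).eventually_const_lt h2
    filter_upwards [he1, he2] with z hz1 hz2
    exact ⟨hz1, hz2⟩
  have h0W : (0 : Fin n → ℝ) ∈ W := by
    refine ⟨by simpa using hδ0, ?_⟩
    have : h 0 = WP (f x - f y) v := by simp [hh]
    rw [this]
    exact hcon
  have hpos' : 0 < volume W := hWopen.measure_pos volume ⟨0, h0W⟩
  have hWnull : volume W = 0 := by
    refine measure_mono_null ?_ (ae_iff.mp hfub)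
    rintro z ⟨h1, h2⟩
    simp only [Set.mem_setOf_eq]
    intro hzn
    exact absurd (hkey z h1 hzn) (not_le.mpr h2)
  rw [hWnull] at hpos'
  exact lt_irrefl _ hpos'
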